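/- Let λ ≥ 0 and let φ, ψ : [0,∞) → ℝ be continuous on some interval [0,ε] (ε > 0) and right-differentiable at 0 with right derivatives φ'(0), ψ'(0); suppose ψ(t) ≤ φ(t) for all t ∈ [0,ε] and ψ(0) = φ(0). Define J_λ(t) := ∫₀ᵗ λ·e^(−λτ)·φ(τ) dτ + e^(−λt)·φ(t) and Q^λ_s := min{ inf_{t ∈ [0,s]} J_λ(t), ∫₀ˢ λ·e^(−λτ)·φ(τ) dτ + e^(−λs)·ψ(s) }. Then lim_{s → 0⁺} ( Q^λ_s − ψ(0) ) / s = min{ 0, ψ'(0) }. -/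

import Mathlib

open Set Filter Topology MeasureTheory

lemma slope_inf_tendsto (f : ℝ → ℝ) {ε a : ℝ} (hε : 0 < ε)
    (hf : ContinuousOn f (Icc 0 ε))
    (hd : HasDerivWithinAt f a (Ici 0) 0) :
    Tendsto (fun s => (sInf (f '' Icc 0 s) - f 0) / s) (𝓝[>] 0) (𝓝 (min 0 a)) := by
  rw [hasDerivWithinAt_iff_tendsto_slope, Ici_sdiff_left] at hd
  rw [Metric.tendsto_nhdsWithin_nhds]
  intro δ hδ
  rw [Metric.tendsto_nhdsWithin_nhds] at hd
  obtain ⟨r, hr, hrd⟩ := hd (δ/2) (by linarith)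
  refine ⟨min r ε, lt_min hr hε, fun s hs hsr => ?_⟩
  have hs0 : 0 < s := hs
  rw [Real.dist_eq, sub_zero, abs_of_pos hs0, lt_min_iff] at hsr
  obtain ⟨hsr', hsε'⟩ := hsr
  have hsε : s ≤ ε := le_of_lt hsε'
  have key : ∀ t, 0 < t → t ≤ s → |(f t - f 0) / t - a| < δ / 2 := by
    intro t ht hts
    have h1 := hrd (x := t) ht
      (by rw [Real.dist_eq, sub_zero, abs_of_pos ht]; exact lt_of_le_of_lt hts hsr')
    rw [Real.dist_eq] at h1
    have h2 : slope f 0 t = (f t - f 0) / t := by rw [slope_def_field]; ring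
    rwa [h2] at h1
  have hsub : Icc (0:ℝ) s ⊆ Icc 0 ε := Icc_subset_Icc le_rfl hsε
  have hcpt : IsCompact (f '' Icc 0 s) :=
    isCompact_Icc.image_of_continuousOn (hf.mono hsub)
  have hne : (f '' Icc 0 s).Nonempty := ⟨f 0, mem_image_of_mem f ⟨le_rfl, hs0.le⟩⟩
  obtain ⟨t₀, ht₀, ht₀eq⟩ := hcpt.sInf_mem hne
  -- lower bound
  have hlow : (min 0 a - δ/2) * s ≤ f t₀ - f 0 := by
    rcases eq_or_lt_of_le ht₀.1 with h | h
    · have : f t₀ - f 0 = 0 := by rw [← h]; ring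
      rw [this]
      have : min 0 a - δ/2 ≤ 0 := by
        have := min_le_left 0 a; linarith
      nlinarith
    · have hk := key t₀ h ht₀.2
      rw [abs_lt] at hk
      have hft : (a - δ/2) * t₀ ≤ f t₀ - f 0 := by
        have ht₀pos : 0 < t₀ := h
        have := hk.1
        have : a - δ/2 < (f t₀ - f 0) / t₀ := by linarith
        calc (a - δ/2) * t₀ ≤ ((f t₀ - f 0) / t₀) * t₀ := by nlinarith
          _ = f t₀ - f 0 := by field_simp
      rcases le_or_gt 0 (a - δ/2) with hc | hc
      · have : (min 0 a - δ/2) * s ≤ 0 := by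
          have h1 : min 0 a - δ/2 ≤ 0 - 0 := by
            have := min_le_left 0 a; linarith
          nlinarith
        nlinarith
      · have h1 : (a - δ/2) * s ≤ (a - δ/2) * t₀ := by nlinarith [ht₀.2]
        have h2 : (min 0 a - δ/2) * s ≤ (a - δ/2) * s := by
          have := min_le_right 0 a; nlinarith
        linarith
  -- upper bound
  have hup : sInf (f '' Icc 0 s) - f 0 ≤ (min 0 a + δ/2) * s := by
    have hIle0 : sInf (f '' Icc 0 s) ≤ f 0 :=
      csInf_le hcpt.bddBelow (mem_image_of_mem f ⟨le_rfl, hs0.le⟩)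
    have hIles : sInf (f '' Icc 0 s) ≤ f s :=
      csInf_le hcpt.bddBelow (mem_image_of_mem f ⟨hs0.le, le_rfl⟩)
    have hk := key s hs0 le_rfl
    rw [abs_lt] at hk
    have hfs : f s - f 0 ≤ (a + δ/2) * s := by
      have : (f s - f 0)/s < a + δ/2 := by linarith [hk.2]
      calc f s - f 0 = ((f s - f 0)/s) * s := by field_simp
        _ ≤ (a + δ/2) * s := by nlinarith
    rcases le_or_gt a 0 with hc | hc
    · rw [min_eq_right hc]; linarith
    · rw [min_eq_left hc.le]
      have : sInf (f '' Icc 0 s) - f 0 ≤ 0 := by linarith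
      nlinarith
  rw [Real.dist_eq, ← ht₀eq, abs_lt]
  rw [← ht₀eq] at hup
  have h1 : min 0 a - δ/2 ≤ (f t₀ - f 0)/s := (le_div_iff₀ hs0).mpr hlow
  have h2 : (f t₀ - f 0)/s ≤ min 0 a + δ/2 := (div_le_iff₀ hs0).mpr hup
  constructor <;> [linarith; linarith]

/-- **Advantage computation in the case V^λ(x) = c(x) (trajectory-wise form).** -/
theorem advantage_limit_boundary_case
    (lam ε : ℝ) (hlam : 0 ≤ lam) (hε : 0 < ε)
    (φ ψ : ℝ → ℝ) (φ' ψ' : ℝ)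
    (hφ : ContinuousOn φ (Set.Icc 0 ε))
    (hψc : ContinuousOn ψ (Set.Icc 0 ε))
    (hφ' : HasDerivWithinAt φ φ' (Set.Ici 0) 0)
    (hψ' : HasDerivWithinAt ψ ψ' (Set.Ici 0) 0)
    (hle : ∀ t ∈ Set.Icc 0 ε, ψ t ≤ φ t)
    (h0 : ψ 0 = φ 0)
    (J : ℝ → ℝ)
    (hJ : ∀ t, J t = (∫ τ in (0:ℝ)..t, lam * Real.exp (-(lam * τ)) * φ τ)
      + Real.exp (-(lam * t)) * φ t)
    (Q : ℝ → ℝ)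
    (hQ : ∀ s, Q s = min (sInf (J '' Set.Icc 0 s))
      ((∫ τ in (0:ℝ)..s, lam * Real.exp (-(lam * τ)) * φ τ)
        + Real.exp (-(lam * s)) * ψ s)) :
    Filter.Tendsto (fun s : ℝ => (Q s - ψ 0) / s)
      (nhdsWithin 0 (Set.Ioi 0)) (nhds (min 0 ψ')) := by
  classical
  set g : ℝ → ℝ := fun τ => lam * Real.exp (-(lam * τ)) * φ τ with hg
  have hgc : ContinuousOn g (Icc 0 ε) := by
    apply ContinuousOn.mul _ hφ
    exact (continuous_const.mul ((Real.continuous_exp.comp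
      (continuous_const.mul continuous_id).neg))).continuousOn
  have hIc : ContinuousOn (fun t => ∫ τ in (0:ℝ)..t, g τ) (Icc 0 ε) := by
    have := intervalIntegral.continuousOn_primitive_interval (a := 0) (b := ε)
      (μ := volume) (f := g) ?_
    · rwa [uIcc_of_le hε.le] at this
    · rw [uIcc_of_le hε.le]; exact hgc.integrableOn_compact isCompact_Icc
  have hmeas : StronglyMeasurableAtFilter g (𝓝[Ioi (0:ℝ)] 0) volume :=
    ⟨Icc 0 ε, Icc_mem_nhdsGT_of_mem ⟨le_rfl, hε⟩, hgc.aestronglyMeasurable measurableSet_Icc⟩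
  have hgcw : ContinuousWithinAt g (Ici 0) 0 := by
    have := hgc 0 ⟨le_rfl, hε.le⟩
    rwa [ContinuousWithinAt, nhdsWithin_Icc_eq_nhdsGE hε] at this
  have hI' : HasDerivWithinAt (fun t => ∫ τ in (0:ℝ)..t, g τ) (g 0) (Ici 0) 0 :=
    intervalIntegral.integral_hasDerivWithinAt_right (by simp) hmeas
      (hgcw.mono Ioi_subset_Ici_self)
  have hE : HasDerivAt (fun t : ℝ => Real.exp (-(lam * t))) (-lam) 0 := by
    have h1 : HasDerivAt (fun t : ℝ => -(lam * t)) (-lam) 0 := by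
      simpa [Pi.neg_def] using ((hasDerivAt_id (0:ℝ)).const_mul lam).neg
    simpa using h1.exp
  have hEc : Continuous (fun t : ℝ => Real.exp (-(lam * t))) :=
    Real.continuous_exp.comp (continuous_const.mul continuous_id).neg
  -- J facts
  have hJfun : J = fun t => (∫ τ in (0:ℝ)..t, g τ) + Real.exp (-(lam * t)) * φ t :=
    funext hJ
  have hJ0 : J 0 = ψ 0 := by rw [hJ 0]; simp [h0]
  have hJc : ContinuousOn J (Icc 0 ε) := by
    rw [hJfun]; exact hIc.add (hEc.continuousOn.mul hφ)
  have hJd : HasDerivWithinAt J φ' (Ici 0) 0 := by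
    rw [hJfun]
    have := hI'.add ((hE.hasDerivWithinAt).mul hφ')
    refine this.congr_deriv ?_
    simp [hg]
  -- G facts
  set G : ℝ → ℝ := fun s => (∫ τ in (0:ℝ)..s, g τ) + Real.exp (-(lam * s)) * ψ s with hGdef
  have hG0 : G 0 = ψ 0 := by simp [hGdef]
  have hGd : HasDerivWithinAt G ψ' (Ici 0) 0 := by
    have := hI'.add ((hE.hasDerivWithinAt).mul hψ')
    refine this.congr_deriv ?_
    simp [hg, h0]
  -- ψ' ≤ φ'
  have hψ'le : ψ' ≤ φ' := by
    have hsub : HasDerivWithinAt (fun t => φ t - ψ t) (φ' - ψ') (Ici 0) 0 := hφ'.sub hψ'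
    rw [hasDerivWithinAt_iff_tendsto_slope, Ici_sdiff_left] at hsub
    have hnn : ∀ᶠ t in 𝓝[>] (0:ℝ), 0 ≤ slope (fun t => φ t - ψ t) 0 t := by
      filter_upwards [Ioo_mem_nhdsGT_of_mem (Set.mem_Ico.mpr ⟨le_rfl, hε⟩)] with t ht
      have h1 : ψ t ≤ φ t := hle t ⟨ht.1.le, ht.2.le⟩
      have h2 : slope (fun t => φ t - ψ t) 0 t = ((φ t - ψ t) - (φ 0 - ψ 0)) / t := by
        rw [slope_def_field]; ring
      rw [h2, h0]
      apply div_nonneg _ ht.1.le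
      linarith
    have := ge_of_tendsto hsub hnn
    linarith
  -- limit of inf part
  have limA : Tendsto (fun s => (sInf (J '' Icc 0 s) - ψ 0) / s) (𝓝[>] 0) (𝓝 (min 0 φ')) := by
    have := slope_inf_tendsto J hε hJc hJd
    rwa [hJ0] at this
  -- limit of G part
  have limB : Tendsto (fun s => (G s - ψ 0) / s) (𝓝[>] 0) (𝓝 ψ') := by
    rw [hasDerivWithinAt_iff_tendsto_slope, Ici_sdiff_left] at hGd
    apply hGd.congr'
    filter_upwards [self_mem_nhdsWithin] with t (ht : (0:ℝ) < t)
    rw [slope_def_field, hG0]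
    ring
  have hmin : Tendsto (fun s => min ((sInf (J '' Icc 0 s) - ψ 0) / s) ((G s - ψ 0) / s))
      (𝓝[>] 0) (𝓝 (min (min 0 φ') ψ')) := limA.min limB
  have heq : min (min 0 φ') ψ' = min 0 ψ' := by
    rw [min_assoc, min_eq_right hψ'le]
  rw [← heq]
  apply hmin.congr'
  filter_upwards [self_mem_nhdsWithin] with s (hs : (0:ℝ) < s)
  rw [hQ s]
  have h1 : min (sInf (J '' Icc 0 s)) ((∫ τ in (0:ℝ)..s, g τ) + Real.exp (-(lam * s)) * ψ s)
      - ψ 0 = min (sInf (J '' Icc 0 s) - ψ 0) (G s - ψ 0) := by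
    rw [hGdef]
    rcases min_cases (sInf (J '' Icc 0 s)) ((∫ τ in (0:ℝ)..s, g τ) + Real.exp (-(lam * s)) * ψ s)
      with ⟨h, h'⟩ | ⟨h, h'⟩ <;> rcases min_cases (sInf (J '' Icc 0 s) - ψ 0)
      (((∫ τ in (0:ℝ)..s, g τ) + Real.exp (-(lam * s)) * ψ s) - ψ 0) with ⟨k, k'⟩ | ⟨k, k'⟩ <;>
      simp_all <;> linarith
  rw [h1, ← min_div_div_right hs.le]
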